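/- Let μ = N(m₁, I_n), let A, C be symmetric positive definite matrices simultaneously diagonalized by an orthogonal matrix P (A = PᵀΛP, C = PᵀDP), and let b, d ∈ ℝⁿ. Define S(x) = Ax + b and σ = N(Cm₁ + d, C²). Then the compatibility condition holds: T_σ^{S_♯μ} = S ∘ T_σ^{μ}, where T_σ^{μ}(x) = C^{−1}(x − d) and T_σ^{S_♯μ}(x) = AC^{−1}(x − d) + b. -/

import Mathlib

open MeasureTheory

/-- Squared Euclidean transport cost on `ℝⁿ × ℝⁿ`. -/
noncomputable def cost2 {n : ℕ} (p : (Fin n → ℝ) × (Fin n → ℝ)) : ℝ :=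
  ∑ i, (p.1 i - p.2 i) ^ 2

/-- The set of couplings of two measures on `ℝⁿ`. -/
def couplings {n : ℕ} (μ ν : Measure (Fin n → ℝ)) :
    Set (Measure ((Fin n → ℝ) × (Fin n → ℝ))) :=
  {π | π.map Prod.fst = μ ∧ π.map Prod.snd = ν}

/-- The Wasserstein-2 distance (for the quadratic Euclidean cost) between two measures
on `ℝⁿ`. -/
noncomputable def W2 {n : ℕ} (μ ν : Measure (Fin n → ℝ)) : ℝ :=
  Real.sqrt (sInf ((fun π => ∫ p, cost2 p ∂π) '' couplings μ ν))

/-- `T` is an optimal transport map from `μ` to `ν` for the quadratic cost: it pushes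
`μ` forward to `ν` and its transport cost realizes the squared Wasserstein-2 distance. -/
noncomputable def IsOptimalMap {n : ℕ} (μ ν : Measure (Fin n → ℝ))
    (T : (Fin n → ℝ) → (Fin n → ℝ)) : Prop :=
  Measurable T ∧ μ.map T = ν ∧ ∫ x, cost2 (T x, x) ∂μ = (W2 μ ν) ^ 2

open Matrix

/-- The Gaussian measure `N(m, S)` on `ℝⁿ`, defined via its density with respect to
Lebesgue measure. -/
noncomputable def gaussianMeasure {n : ℕ} (m : Fin n → ℝ) (S : Matrix (Fin n) (Fin n) ℝ) :
    Measure (Fin n → ℝ) :=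
  volume.withDensity fun x => ENNReal.ofReal
    ((Real.sqrt ((2 * Real.pi) ^ n * S.det))⁻¹ *
      Real.exp (-(dotProduct (x - m) (S⁻¹.mulVec (x - m))) / 2))

namespace OTAux

variable {n : ℕ}

/-! ### Elementary dot-product and continuity facts -/

lemma dot_mulVec_comm (M : Matrix (Fin n) (Fin n) ℝ) (v w : Fin n → ℝ) :
    (M.mulVec v) ⬝ᵥ w = v ⬝ᵥ (Mᵀ.mulVec w) := by
  rw [dotProduct_comm, dotProduct_mulVec, dotProduct_comm, ← mulVec_transpose]

lemma continuous_sumsq : Continuous fun x : Fin n → ℝ => ∑ i, x i ^ 2 :=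
  continuous_finset_sum _ fun i _ => (continuous_apply i).pow 2

lemma continuous_qform (W : Matrix (Fin n) (Fin n) ℝ) (m : Fin n → ℝ) :
    Continuous fun x : Fin n → ℝ => (x - m) ⬝ᵥ (W.mulVec (x - m)) :=
  (continuous_id.sub continuous_const).dotProduct
    (continuous_const.matrix_mulVec (continuous_id.sub continuous_const))

lemma continuous_dotv (v : Fin n → ℝ) : Continuous fun x : Fin n → ℝ => v ⬝ᵥ x :=
  continuous_const.dotProduct continuous_id

lemma continuous_affine (M : Matrix (Fin n) (Fin n) ℝ) (c : Fin n → ℝ) :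
    Continuous fun x : Fin n → ℝ => M.mulVec x + c :=
  (continuous_const.matrix_mulVec continuous_id).add continuous_const

lemma continuous_affine' (M : Matrix (Fin n) (Fin n) ℝ) (dd bb : Fin n → ℝ) :
    Continuous fun x : Fin n → ℝ => M.mulVec (x - dd) + bb :=
  ((continuous_const.matrix_mulVec (continuous_id.sub continuous_const)).add continuous_const)

lemma continuous_cost2 : Continuous (cost2 (n := n)) := by
  unfold cost2
  exact continuous_finset_sum _ fun i _ =>
    (((continuous_apply i).comp continuous_fst).sub ((continuous_apply i).comp continuous_snd)).pow 2

lemma measurable_gaussian_density (m : Fin n → ℝ) (V : Matrix (Fin n) (Fin n) ℝ) :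
    Measurable fun x : Fin n → ℝ => ENNReal.ofReal
      ((Real.sqrt ((2 * Real.pi) ^ n * V.det))⁻¹ *
        Real.exp (-(dotProduct (x - m) (V⁻¹.mulVec (x - m))) / 2)) :=
  ENNReal.measurable_ofReal.comp
    ((continuous_const.mul (Real.continuous_exp.comp
      (((continuous_qform V⁻¹ m).neg).div_const 2))).measurable)

/-! ### Quadratic growth -/

def QG (F : (Fin n → ℝ) → ℝ) : Prop :=
  ∃ K : ℝ, ∀ x, |F x| ≤ K * (1 + ∑ i, x i ^ 2)

lemma one_add_sumsq_nonneg (x : Fin n → ℝ) : (0:ℝ) ≤ 1 + ∑ i, x i ^ 2 := by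
  have : (0:ℝ) ≤ ∑ i, x i ^ 2 := Finset.sum_nonneg fun i _ => sq_nonneg _
  linarith

lemma one_le_one_add_sumsq (x : Fin n → ℝ) : (1:ℝ) ≤ 1 + ∑ i, x i ^ 2 := by
  have : (0:ℝ) ≤ ∑ i, x i ^ 2 := Finset.sum_nonneg fun i _ => sq_nonneg _
  linarith

lemma QG.abs_bound {F : (Fin n → ℝ) → ℝ} (h : QG F) :
    ∃ K : ℝ, 0 ≤ K ∧ ∀ x, |F x| ≤ K * (1 + ∑ i, x i ^ 2) := by
  obtain ⟨K, hK⟩ := h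
  refine ⟨|K|, abs_nonneg _, fun x => (hK x).trans ?_⟩
  exact mul_le_mul_of_nonneg_right (le_abs_self K) (one_add_sumsq_nonneg x)

lemma QG.add {F G : (Fin n → ℝ) → ℝ} (hF : QG F) (hG : QG G) : QG (fun x => F x + G x) := by
  obtain ⟨K1, h1⟩ := hF; obtain ⟨K2, h2⟩ := hG
  refine ⟨K1 + K2, fun x => ?_⟩
  have := abs_add_le (F x) (G x)
  have := h1 x; have := h2 x
  nlinarith

lemma QG.neg {F : (Fin n → ℝ) → ℝ} (hF : QG F) : QG (fun x => -F x) := by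
  obtain ⟨K, h⟩ := hF; exact ⟨K, fun x => by rw [abs_neg]; exact h x⟩

lemma QG.sub {F G : (Fin n → ℝ) → ℝ} (hF : QG F) (hG : QG G) : QG (fun x => F x - G x) := by
  simpa [sub_eq_add_neg] using hF.add hG.neg

lemma QG.const (c : ℝ) : QG (fun _ : Fin n → ℝ => c) := by
  refine ⟨|c|, fun x => ?_⟩
  have h1 := one_le_one_add_sumsq x
  nlinarith [abs_nonneg c]

lemma QG.const_mul {F : (Fin n → ℝ) → ℝ} (hF : QG F) (c : ℝ) : QG (fun x => c * F x) := by
  obtain ⟨K, hK0, h⟩ := hF.abs_bound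
  refine ⟨|c| * K, fun x => ?_⟩
  rw [abs_mul, mul_assoc]
  exact mul_le_mul_of_nonneg_left (h x) (abs_nonneg c)

lemma qg_sumsq : QG (fun x : Fin n → ℝ => ∑ i, x i ^ 2) := by
  refine ⟨1, fun x => ?_⟩
  rw [abs_of_nonneg (Finset.sum_nonneg fun i _ => sq_nonneg _)]
  linarith

lemma abs_dot_le (u w : Fin n → ℝ) :
    |u ⬝ᵥ w| ≤ (∑ i, u i ^ 2 + ∑ i, w i ^ 2) / 2 := by
  have h1 : |u ⬝ᵥ w| ≤ ∑ i, |u i * w i| := by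
    rw [dotProduct]
    exact Finset.abs_sum_le_sum_abs _ _
  have h2 : ∑ i, |u i * w i| ≤ ∑ i, (u i ^ 2 + w i ^ 2) / 2 := by
    apply Finset.sum_le_sum
    intro i _
    rw [abs_mul]
    nlinarith [sq_nonneg (|u i| - |w i|), sq_abs (u i), sq_abs (w i), abs_nonneg (u i),
      abs_nonneg (w i)]
  have h3 : ∑ i, (u i ^ 2 + w i ^ 2) / 2 = (∑ i, u i ^ 2 + ∑ i, w i ^ 2) / 2 := by
    rw [← Finset.sum_div, Finset.sum_add_distrib]
  linarith

lemma qg_dot (v : Fin n → ℝ) : QG (fun x : Fin n → ℝ => v ⬝ᵥ x) := by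
  refine ⟨(∑ i, v i ^ 2) / 2 + 1 / 2, fun x => ?_⟩
  have h := abs_dot_le v x
  have hs : (0:ℝ) ≤ ∑ i, x i ^ 2 := Finset.sum_nonneg fun i _ => sq_nonneg _
  have hv : (0:ℝ) ≤ ∑ i, v i ^ 2 := Finset.sum_nonneg fun i _ => sq_nonneg _
  nlinarith

lemma sumsq_mulVec_le (M : Matrix (Fin n) (Fin n) ℝ) (x : Fin n → ℝ) :
    ∑ i, (M.mulVec x) i ^ 2 ≤ (∑ i, ∑ j, M i j ^ 2) * ∑ j, x j ^ 2 := by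
  have h1 : ∀ i, (M.mulVec x) i ^ 2 ≤ (∑ j, M i j ^ 2) * ∑ j, x j ^ 2 := by
    intro i
    have : (M.mulVec x) i = ∑ j, M i j * x j := rfl
    rw [this]
    exact Finset.sum_mul_sq_le_sq_mul_sq _ _ _
  calc ∑ i, (M.mulVec x) i ^ 2 ≤ ∑ i, (∑ j, M i j ^ 2) * ∑ j, x j ^ 2 :=
        Finset.sum_le_sum fun i _ => h1 i
    _ = (∑ i, ∑ j, M i j ^ 2) * ∑ j, x j ^ 2 := by rw [Finset.sum_mul]

lemma sumsq_sub_le (x mm : Fin n → ℝ) :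
    ∑ i, ((x - mm) i) ^ 2 ≤ 2 * ∑ i, x i ^ 2 + 2 * ∑ i, mm i ^ 2 := by
  have h : ∀ i ∈ Finset.univ, ((x - mm) i) ^ 2 ≤ 2 * x i ^ 2 + 2 * mm i ^ 2 := by
    intro i _
    simp only [Pi.sub_apply]
    nlinarith [sq_nonneg (x i + mm i)]
  calc ∑ i, ((x - mm) i) ^ 2 ≤ ∑ i, (2 * x i ^ 2 + 2 * mm i ^ 2) := Finset.sum_le_sum h
    _ = 2 * ∑ i, x i ^ 2 + 2 * ∑ i, mm i ^ 2 := by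
        rw [Finset.sum_add_distrib, ← Finset.mul_sum, ← Finset.mul_sum]

lemma sumsq_add_le (x c : Fin n → ℝ) :
    ∑ i, ((x + c) i) ^ 2 ≤ 2 * ∑ i, x i ^ 2 + 2 * ∑ i, c i ^ 2 := by
  have h : ∀ i ∈ Finset.univ, ((x + c) i) ^ 2 ≤ 2 * x i ^ 2 + 2 * c i ^ 2 := by
    intro i _
    simp only [Pi.add_apply]
    nlinarith [sq_nonneg (x i - c i)]
  calc ∑ i, ((x + c) i) ^ 2 ≤ ∑ i, (2 * x i ^ 2 + 2 * c i ^ 2) := Finset.sum_le_sum h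
    _ = 2 * ∑ i, x i ^ 2 + 2 * ∑ i, c i ^ 2 := by
        rw [Finset.sum_add_distrib, ← Finset.mul_sum, ← Finset.mul_sum]

lemma qg_form (M : Matrix (Fin n) (Fin n) ℝ) (mm : Fin n → ℝ) :
    QG (fun x : Fin n → ℝ => (x - mm) ⬝ᵥ (M.mulVec (x - mm))) := by
  set SM := ∑ i, ∑ j, M i j ^ 2 with hSM
  set smm := ∑ i, mm i ^ 2 with hsmm
  have hSM0 : 0 ≤ SM := Finset.sum_nonneg fun i _ => Finset.sum_nonneg fun j _ => sq_nonneg _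
  have hsmm0 : 0 ≤ smm := Finset.sum_nonneg fun i _ => sq_nonneg _
  refine ⟨(1 + SM) * (1 + smm), fun x => ?_⟩
  set s := ∑ i, x i ^ 2 with hs
  have hs0 : 0 ≤ s := Finset.sum_nonneg fun i _ => sq_nonneg _
  have hu : ∑ i, ((x - mm) i) ^ 2 ≤ 2 * s + 2 * smm := sumsq_sub_le x mm
  have hu0 : (0:ℝ) ≤ ∑ i, ((x - mm) i) ^ 2 := Finset.sum_nonneg fun i _ => sq_nonneg _
  have hw : ∑ i, (M.mulVec (x - mm)) i ^ 2 ≤ SM * ∑ i, ((x - mm) i) ^ 2 :=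
    sumsq_mulVec_le M (x - mm)
  have h := abs_dot_le (x - mm) (M.mulVec (x - mm))
  beta_reduce
  nlinarith [mul_le_mul_of_nonneg_left hu (show (0:ℝ) ≤ 1 + SM by linarith),
    mul_nonneg hsmm0 hs0, mul_nonneg (mul_nonneg hSM0 hsmm0) hs0, mul_nonneg hSM0 hsmm0,
    mul_nonneg hSM0 hs0]

lemma QG.comp_affine {F : (Fin n → ℝ) → ℝ} (hF : QG F) (M : Matrix (Fin n) (Fin n) ℝ)
    (c : Fin n → ℝ) : QG (fun x => F (M.mulVec x + c)) := by
  obtain ⟨K, hK0, hK⟩ := hF.abs_bound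
  set SM := ∑ i, ∑ j, M i j ^ 2 with hSM
  set sc := ∑ i, c i ^ 2 with hsc
  have hSM0 : 0 ≤ SM := Finset.sum_nonneg fun i _ => Finset.sum_nonneg fun j _ => sq_nonneg _
  have hsc0 : 0 ≤ sc := Finset.sum_nonneg fun i _ => sq_nonneg _
  refine ⟨K * (1 + 2 * SM + 2 * sc), fun x => ?_⟩
  set s := ∑ i, x i ^ 2 with hs
  have hs0 : 0 ≤ s := Finset.sum_nonneg fun i _ => sq_nonneg _
  have h1 : ∑ i, ((M.mulVec x + c) i) ^ 2 ≤ 2 * (SM * s) + 2 * sc := by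
    have := sumsq_add_le (M.mulVec x) c
    have := sumsq_mulVec_le M x
    nlinarith
  have h2 := hK (M.mulVec x + c)
  beta_reduce
  nlinarith [mul_le_mul_of_nonneg_left h1 hK0, mul_nonneg hK0 hs0, mul_nonneg hK0 hSM0,
    mul_nonneg (mul_nonneg hK0 hsc0) hs0, mul_nonneg (mul_nonneg hK0 hSM0) hs0,
    mul_nonneg hK0 hsc0]

lemma QG.integrable {σ : Measure (Fin n → ℝ)} {F : (Fin n → ℝ) → ℝ}
    (hσ2 : Integrable (fun x => 1 + ∑ i, x i ^ 2) σ)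
    (hF : AEStronglyMeasurable F σ) (h : QG F) : Integrable F σ := by
  obtain ⟨K, hK⟩ := h
  exact (hσ2.const_mul K).mono' hF (Filter.Eventually.of_forall fun x => by
    rw [Real.norm_eq_abs]; exact hK x)

/-! ### Pushforward of densities under affine maps -/

lemma map_withDensity_affine (B : Matrix (Fin n) (Fin n) ℝ) (hdet : B.det ≠ 0)
    (t : Fin n → ℝ) (f : (Fin n → ℝ) → ENNReal) (hf : Measurable f) :
    (volume.withDensity f).map (fun x => B.mulVec x + t) =
      volume.withDensity fun y => ENNReal.ofReal |B.det|⁻¹ * f (B⁻¹.mulVec (y - t)) := by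
  have hU : IsUnit B.det := isUnit_iff_ne_zero.mpr hdet
  have hTm : Measurable fun x : Fin n → ℝ => B.mulVec x + t := (continuous_affine B t).measurable
  have hg : Measurable fun y : Fin n → ℝ => f (B⁻¹.mulVec (y - t)) :=
    hf.comp ((continuous_const.matrix_mulVec (continuous_id.sub continuous_const)).measurable)
  have hmap : volume.map (fun x : Fin n → ℝ => B.mulVec x + t)
      = ENNReal.ofReal |B.det|⁻¹ • volume := by
    have h1 : (fun x : Fin n → ℝ => B.mulVec x + t) = (fun y => y + t) ∘ ⇑(Matrix.toLin' B) := by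
      funext x; simp [Matrix.toLin'_apply]
    rw [h1, ← Measure.map_map (measurable_add_const t)
      (Matrix.toLin' B).continuous_of_finiteDimensional.measurable,
      Real.map_matrix_volume_pi_eq_smul_volume_pi hdet, Measure.map_smul,
      map_add_right_eq_self, abs_inv]
  ext s hs
  rw [Measure.map_apply hTm hs, withDensity_apply _ (hTm hs), withDensity_apply _ hs]
  have hinv : ∀ x : Fin n → ℝ, B⁻¹.mulVec (B.mulVec x + t - t) = x := by
    intro x
    rw [add_sub_cancel_right, mulVec_mulVec, Matrix.nonsing_inv_mul _ hU, one_mulVec]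
  calc ∫⁻ x in (fun x => B.mulVec x + t) ⁻¹' s, f x ∂volume
      = ∫⁻ x in (fun x => B.mulVec x + t) ⁻¹' s,
          f (B⁻¹.mulVec ((B.mulVec x + t) - t)) ∂volume := by simp only [hinv]
    _ = ∫⁻ y in s, f (B⁻¹.mulVec (y - t))
          ∂(volume.map (fun x : Fin n → ℝ => B.mulVec x + t)) :=
        (setLIntegral_map hs hg hTm).symm
    _ = ENNReal.ofReal |B.det|⁻¹ * ∫⁻ y in s, f (B⁻¹.mulVec (y - t)) ∂volume := by
        rw [hmap, Measure.restrict_smul, lintegral_smul_measure, smul_eq_mul]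
    _ = ∫⁻ y in s, ENNReal.ofReal |B.det|⁻¹ * f (B⁻¹.mulVec (y - t)) ∂volume :=
        (lintegral_const_mul _ hg).symm

/-! ### The Gaussian pushforward identity -/

lemma gaussianMeasure_map_inv (C : Matrix (Fin n) (Fin n) ℝ) (hCs : Cᵀ = C)
    (hdc : 0 < C.det) (m dd : Fin n → ℝ) :
    (gaussianMeasure (C.mulVec m + dd) (C * C)).map (fun x => C⁻¹.mulVec (x - dd)) =
      gaussianMeasure m 1 := by
  have hUC : IsUnit C.det := isUnit_iff_ne_zero.mpr hdc.ne'
  have hdetinv : (C⁻¹).det ≠ 0 := by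
    rw [Matrix.det_nonsing_inv]
    simp [Ring.inverse_eq_inv']
    exact hdc.ne'
  have hfun : (fun x : Fin n → ℝ => C⁻¹.mulVec (x - dd))
      = fun x => C⁻¹.mulVec x + (-(C⁻¹.mulVec dd)) := by
    funext x; rw [mulVec_sub, sub_eq_add_neg]
  rw [gaussianMeasure, hfun,
    map_withDensity_affine C⁻¹ hdetinv _ _ (measurable_gaussian_density _ _), gaussianMeasure]
  congr 1
  funext y
  have harg : (C⁻¹)⁻¹.mulVec (y - -(C⁻¹.mulVec dd)) - (C.mulVec m + dd) = C.mulVec (y - m) := by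
    rw [Matrix.nonsing_inv_nonsing_inv _ hUC, sub_neg_eq_add, mulVec_add, mulVec_mulVec,
      Matrix.mul_nonsing_inv _ hUC, one_mulVec, mulVec_sub]
    abel
  rw [harg]
  have hquad : (C.mulVec (y - m)) ⬝ᵥ ((C * C)⁻¹.mulVec (C.mulVec (y - m)))
      = (y - m) ⬝ᵥ ((1 : Matrix (Fin n) (Fin n) ℝ)⁻¹.mulVec (y - m)) := by
    have h1 : (C * C)⁻¹.mulVec (C.mulVec (y - m)) = C⁻¹.mulVec (y - m) := by
      rw [Matrix.mul_inv_rev, mulVec_mulVec, Matrix.mul_assoc, Matrix.nonsing_inv_mul _ hUC,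
        mul_one]
    rw [h1, dot_mulVec_comm, hCs, mulVec_mulVec, Matrix.mul_nonsing_inv _ hUC, one_mulVec,
      inv_one, one_mulVec]
  rw [hquad]
  rw [← ENNReal.ofReal_mul (by positivity), ← mul_assoc]
  congr 2
  have hsq : Real.sqrt ((2 * Real.pi) ^ n * (C * C).det)
      = Real.sqrt ((2 * Real.pi) ^ n) * C.det := by
    rw [det_mul, Real.sqrt_mul (by positivity), Real.sqrt_mul_self hdc.le]
  have hinvdet : |(C⁻¹).det|⁻¹ = C.det := by
    rw [Matrix.det_nonsing_inv, Ring.inverse_eq_inv', abs_inv, inv_inv, abs_of_pos hdc]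
  rw [hinvdet, hsq, det_one, mul_one]
  have hsp : (0:ℝ) < Real.sqrt ((2 * Real.pi) ^ n) := Real.sqrt_pos.mpr (by positivity)
  field_simp

/-! ### Second moments of Gaussian measures -/

lemma toReal_ofReal_le (a : ℝ) : (ENNReal.ofReal a).toReal ≤ |a| := by
  rcases le_or_gt a 0 with h | h
  · rw [ENNReal.ofReal_eq_zero.mpr h]
    simpa using abs_nonneg a
  · rw [ENNReal.toReal_ofReal h.le]
    exact le_abs_self a

lemma integrable_exp_neg_mul_sumsq {c : ℝ} (hc : 0 < c) :
    Integrable (fun z : Fin n → ℝ => Real.exp (-c * ∑ i, z i ^ 2)) := by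
  have h := (GaussianFourier.integrable_cexp_neg_mul_sum_add (b := (c : ℂ))
    (by simpa using hc) (fun _ : Fin n => 0)).norm
  have e : ∀ z : Fin n → ℝ,
      ‖Complex.exp (-(c:ℂ) * ∑ i, (z i : ℂ) ^ 2 + ∑ i : Fin n, (0:ℂ) * (z i : ℂ))‖
        = Real.exp (-c * ∑ i, z i ^ 2) := by
    intro z
    have e1 : (-(c:ℂ) * ∑ i, (z i : ℂ) ^ 2 + ∑ i : Fin n, (0:ℂ) * (z i : ℂ))
        = ((-c * ∑ i, z i ^ 2 : ℝ) : ℂ) := by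
      push_cast
      simp
    rw [Complex.norm_exp, e1, Complex.ofReal_re]
  exact h.congr (Filter.Eventually.of_forall fun z => e z)

set_option maxHeartbeats 1000000 in
lemma gaussian_moment (m : Fin n → ℝ) (V : Matrix (Fin n) (Fin n) ℝ) {ε : ℝ} (hε : 0 < ε)
    (hq : ∀ z : Fin n → ℝ, ε * ∑ i, z i ^ 2 ≤ z ⬝ᵥ (V⁻¹.mulVec z)) :
    Integrable (fun x : Fin n → ℝ => 1 + ∑ i, x i ^ 2) (gaussianMeasure m V) := by
  set Z : ℝ := (Real.sqrt ((2 * Real.pi) ^ n * V.det))⁻¹ with hZ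
  rw [gaussianMeasure,
    integrable_withDensity_iff (measurable_gaussian_density m V)
      (Filter.Eventually.of_forall fun x => ENNReal.ofReal_lt_top)]
  set sm := ∑ i, m i ^ 2 with hsm
  have hsm0 : 0 ≤ sm := Finset.sum_nonneg fun i _ => sq_nonneg _
  set K : ℝ := |Z| * (1 + 2 * sm) * (1 + 8 / ε) with hK
  have hbase : Integrable (fun z : Fin n → ℝ => Real.exp (-(ε/4) * ∑ i, z i ^ 2)) :=
    integrable_exp_neg_mul_sumsq (by positivity)
  have hG : Integrable (fun x : Fin n → ℝ => K * Real.exp (-(ε/4) * ∑ i, ((x - m) i) ^ 2)) :=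
    ((hbase.comp_sub_right m).const_mul K)
  apply hG.mono' (((continuous_const.add continuous_sumsq).measurable.mul
    (ENNReal.measurable_toReal.comp (measurable_gaussian_density m V))).aestronglyMeasurable)
  refine Filter.Eventually.of_forall fun x => ?_
  simp only [Pi.mul_apply, Pi.add_apply, Function.comp_apply]
  set s := ∑ i, ((x - m) i) ^ 2 with hs
  set t := ∑ i, x i ^ 2 with ht
  have hs0 : 0 ≤ s := Finset.sum_nonneg fun i _ => sq_nonneg _
  have ht0 : 0 ≤ t := Finset.sum_nonneg fun i _ => sq_nonneg _
  have hts : t ≤ 2 * s + 2 * sm := by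
    have h1 : ∑ i, x i ^ 2 = ∑ i, ((x - m) + m) i ^ 2 := by rw [sub_add_cancel]
    have h2 := sumsq_add_le (x - m) m
    rw [ht, h1]
    exact h2
  set q := (x - m) ⬝ᵥ (V⁻¹.mulVec (x - m)) with hq'
  have hqs : ε * s ≤ q := hq (x - m)
  set eu := Real.exp (-(ε/4) * s) with heu'
  have heu : 0 < eu := Real.exp_pos _
  have heu1 : eu ≤ 1 := Real.exp_le_one_iff.mpr (by nlinarith)
  set a := Z * Real.exp (-q / 2) with ha
  have hA1 : (ENNReal.ofReal a).toReal ≤ |Z| * Real.exp (-q / 2) := by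
    calc (ENNReal.ofReal a).toReal ≤ |a| := toReal_ofReal_le a
      _ = |Z| * Real.exp (-q / 2) := by
          rw [ha, abs_mul, abs_of_pos (Real.exp_pos _)]
  have hA2 : Real.exp (-q / 2) ≤ eu * eu := by
    have h1 : Real.exp (-q / 2) ≤ Real.exp (-(ε * s) / 2) :=
      Real.exp_le_exp.mpr (by linarith)
    have h2 : Real.exp (-(ε * s) / 2) = eu * eu := by
      rw [heu', ← Real.exp_add]; congr 1; ring
    linarith
  have hA3 : (1 + t) ≤ (1 + 2 * sm) * (1 + 2 * s) := by
    nlinarith [mul_nonneg hsm0 hs0]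
  have h2s : 2 * s * eu ≤ 8 / ε := by
    have h1 := Real.add_one_le_exp ((ε/4) * s)
    have hepos : (0:ℝ) < Real.exp ((ε/4) * s) := Real.exp_pos _
    have heuu : eu = (Real.exp ((ε/4) * s))⁻¹ := by
      rw [heu', ← Real.exp_neg]; congr 1; ring
    have h2 : 2 * s ≤ (8 / ε) * Real.exp ((ε/4) * s) := by
      rw [div_mul_eq_mul_div, le_div_iff₀ hε]
      nlinarith
    calc 2 * s * eu ≤ ((8 / ε) * Real.exp ((ε/4) * s)) * eu :=
          mul_le_mul_of_nonneg_right h2 heu.le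
      _ = 8 / ε := by rw [heuu]; field_simp
  have hB : (1 + 2 * s) * eu ≤ 1 + 8 / ε := by nlinarith [h2s, heu1, heu.le, hs0]
  have hgoal : (1 + t) * (ENNReal.ofReal a).toReal ≤ K * eu := by
    calc (1 + t) * (ENNReal.ofReal a).toReal
        ≤ (1 + t) * (|Z| * Real.exp (-q / 2)) :=
          mul_le_mul_of_nonneg_left hA1 (by linarith)
      _ ≤ ((1 + 2 * sm) * (1 + 2 * s)) * (|Z| * (eu * eu)) := by
          refine mul_le_mul hA3 (mul_le_mul_of_nonneg_left hA2 (abs_nonneg Z))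
            (by positivity) (by nlinarith [mul_nonneg hsm0 hs0])
      _ = (|Z| * (1 + 2 * sm)) * ((1 + 2 * s) * eu) * eu := by ring
      _ ≤ (|Z| * (1 + 2 * sm)) * (1 + 8 / ε) * eu := by
          have h9 := mul_le_mul_of_nonneg_left hB
            (show (0:ℝ) ≤ |Z| * (1 + 2 * sm) by positivity)
          exact mul_le_mul_of_nonneg_right h9 heu.le
      _ = K * eu := by rw [hK]
  rw [Real.norm_eq_abs, abs_of_nonneg (mul_nonneg (by linarith) ENNReal.toReal_nonneg)]
  exact hgoal

/-! ### The optimality master lemma -/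

lemma isOptimalMap_affine (σ : Measure (Fin n → ℝ))
    (hσ2 : Integrable (fun x => 1 + ∑ i, x i ^ 2) σ)
    (M N : Matrix (Fin n) (Fin n) ℝ) (hMsym : Mᵀ = M) (hMN : M * N = 1) (hNM : N * M = 1)
    (hNpsd : ∀ v : Fin n → ℝ, 0 ≤ v ⬝ᵥ (N.mulVec v))
    (dd bb : Fin n → ℝ) (T : (Fin n → ℝ) → (Fin n → ℝ))
    (hT : T = fun x => M.mulVec (x - dd) + bb)
    (ν : Measure (Fin n → ℝ)) (hν : σ.map T = ν) :
    IsOptimalMap σ ν T := by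
  subst hT; subst hν
  set T : (Fin n → ℝ) → (Fin n → ℝ) := fun x => M.mulVec (x - dd) + bb with hTdef
  have hTcont : Continuous T := continuous_affine' M dd bb
  have hTmeas : Measurable T := hTcont.measurable
  -- the potentials
  set g : (Fin n → ℝ) → ℝ := fun x => ∑ i, x i ^ 2 - (x - dd) ⬝ᵥ (M.mulVec (x - dd))
      - 2 * (bb ⬝ᵥ x) + 2 * (dd ⬝ᵥ bb) with hgdef
  set h : (Fin n → ℝ) → ℝ := fun y => ∑ i, y i ^ 2 - (y - bb) ⬝ᵥ (N.mulVec (y - bb))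
      - 2 * (dd ⬝ᵥ y) with hhdef
  have hgcont : Continuous g := by
    apply Continuous.add
    apply Continuous.sub
    apply Continuous.sub continuous_sumsq (continuous_qform M dd)
    exact continuous_const.mul (continuous_dotv bb)
    exact continuous_const
  have hhcont : Continuous h := by
    apply Continuous.sub
    apply Continuous.sub continuous_sumsq (continuous_qform N bb)
    exact continuous_const.mul (continuous_dotv dd)
  -- pointwise decomposition of the cost
  have cost_eq : ∀ x y : Fin n → ℝ, cost2 (x, y) = g x + h y +
      (M.mulVec (x - dd) - (y - bb)) ⬝ᵥ (N.mulVec (M.mulVec (x - dd) - (y - bb))) := by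
    intro x y
    have step1 : cost2 (x, y) = ∑ i, x i ^ 2 + ∑ i, y i ^ 2 - 2 * (x ⬝ᵥ y) := by
      have e : ∀ i : Fin n, (x i - y i) ^ 2 = x i ^ 2 + y i ^ 2 - 2 * (x i * y i) := by
        intro i; ring
      simp only [cost2]
      simp only [e]
      rw [Finset.sum_sub_distrib, Finset.sum_add_distrib, ← Finset.mul_sum]
      rfl
    have step2 : ∀ u v : Fin n → ℝ,
        (M.mulVec u - v) ⬝ᵥ (N.mulVec (M.mulVec u - v))
        = u ⬝ᵥ (M.mulVec u) - 2 * (u ⬝ᵥ v) + v ⬝ᵥ (N.mulVec v) := by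
      intro u v
      have e1 : N.mulVec (M.mulVec u - v) = u - N.mulVec v := by
        rw [mulVec_sub, mulVec_mulVec, hNM, one_mulVec]
      rw [e1, sub_dotProduct, dotProduct_sub, dotProduct_sub]
      have e2 : (M.mulVec u) ⬝ᵥ u = u ⬝ᵥ (M.mulVec u) := by
        rw [dot_mulVec_comm, hMsym]
      have e3 : (M.mulVec u) ⬝ᵥ (N.mulVec v) = u ⬝ᵥ v := by
        rw [dot_mulVec_comm, hMsym, mulVec_mulVec, hMN, one_mulVec]
      have e4 : v ⬝ᵥ u = u ⬝ᵥ v := dotProduct_comm _ _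
      rw [e2, e3, e4]
      ring
    have step3 : (x - dd) ⬝ᵥ (y - bb)
        = x ⬝ᵥ y - x ⬝ᵥ bb - dd ⬝ᵥ y + dd ⬝ᵥ bb := by
      rw [sub_dotProduct, dotProduct_sub, dotProduct_sub]
      ring
    have step4 : bb ⬝ᵥ x = x ⬝ᵥ bb := dotProduct_comm _ _
    rw [step1, step2 (x - dd) (y - bb), step3, hgdef, hhdef]
    simp only [step4]
    ring
  have hineq : ∀ x y : Fin n → ℝ, g x + h y ≤ cost2 (x, y) := by
    intro x y
    rw [cost_eq x y]
    have := hNpsd (M.mulVec (x - dd) - (y - bb))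
    linarith
  have hgraph : ∀ x : Fin n → ℝ, cost2 (x, T x) = g x + h (T x) := by
    intro x
    rw [cost_eq x (T x)]
    have e : M.mulVec (x - dd) - (T x - bb) = 0 := by
      simp [hTdef]
    rw [e]
    simp
  have hcostsym : ∀ x : Fin n → ℝ, cost2 (x, T x) = cost2 (T x, x) := by
    intro x
    unfold cost2
    exact Finset.sum_congr rfl fun i _ => by ring
  -- quadratic growth and integrability
  have hg_qg : QG g := by
    have h1 := (qg_sumsq (n := n)).sub (qg_form M dd)
    have h2 := h1.sub ((qg_dot bb).const_mul 2)
    have h3 := h2.add (QG.const (2 * (dd ⬝ᵥ bb)))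
    exact h3
  have hh_qg : QG h := by
    have h1 := (qg_sumsq (n := n)).sub (qg_form N bb)
    exact h1.sub ((qg_dot dd).const_mul 2)
  have harg : ∀ x, T x = M.mulVec x + (bb - M.mulVec dd) := by
    intro x
    show M.mulVec (x - dd) + bb = _
    rw [mulVec_sub]
    abel
  have hTswap : (fun x : Fin n → ℝ => h (T x))
      = fun x => h (M.mulVec x + (bb - M.mulVec dd)) := by
    funext x
    rw [harg x]
  have hhT_qg : QG (fun x => h (T x)) := by
    rw [hTswap]
    exact hh_qg.comp_affine M (bb - M.mulVec dd)
  have hgσ : Integrable g σ := hg_qg.integrable hσ2 hgcont.aestronglyMeasurable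
  have hhTσ : Integrable (fun x => h (T x)) σ :=
    hhT_qg.integrable hσ2 (hhcont.comp hTcont).aestronglyMeasurable
  have hν2 : Integrable (fun y => 1 + ∑ i, y i ^ 2) (σ.map T) := by
    rw [integrable_map_measure (g := fun y : Fin n → ℝ => 1 + ∑ i, y i ^ 2)
      ((continuous_const.add continuous_sumsq).aestronglyMeasurable)
      hTmeas.aemeasurable]
    have : QG (fun x => 1 + ∑ i, (T x) i ^ 2) := by
      have h1 : QG (fun y : Fin n → ℝ => 1 + ∑ i, y i ^ 2) := (QG.const 1).add qg_sumsq
      have h2 : (fun x : Fin n → ℝ => 1 + ∑ i, (T x) i ^ 2)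
          = fun x => (fun y : Fin n → ℝ => 1 + ∑ i, y i ^ 2) (M.mulVec x + (bb - M.mulVec dd)) := by
        funext x
        rw [harg x]
      rw [h2]
      exact h1.comp_affine M _
    exact this.integrable hσ2
      ((continuous_const.add (continuous_sumsq.comp hTcont)).aestronglyMeasurable)
  have hhν : Integrable h (σ.map T) :=
    (integrable_map_measure hhcont.aestronglyMeasurable hTmeas.aemeasurable).mpr hhTσ
  -- the candidate value
  set c := ∫ x, cost2 (T x, x) ∂σ with hc
  have hc0 : 0 ≤ c :=
    integral_nonneg fun x => Finset.sum_nonneg fun i _ => sq_nonneg _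
  have hcval : c = ∫ x, (g x + h (T x)) ∂σ := by
    rw [hc]
    apply integral_congr_ae
    refine Filter.Eventually.of_forall fun x => ?_
    show cost2 (T x, x) = g x + h (T x)
    rw [← hcostsym x, hgraph x]
  have hcsplit : c = (∫ x, g x ∂σ) + ∫ y, h y ∂(σ.map T) := by
    rw [hcval, integral_add hgσ hhTσ,
      integral_map hTmeas.aemeasurable hhcont.aestronglyMeasurable]
  -- the graph coupling
  set π₀ : Measure ((Fin n → ℝ) × (Fin n → ℝ)) := σ.map (fun x => (x, T x)) with hπ₀
  have hpairmeas : Measurable fun x : Fin n → ℝ => (x, T x) := measurable_id.prodMk hTmeas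
  have hπ₀mem : π₀ ∈ couplings σ (σ.map T) := by
    constructor
    · rw [hπ₀, Measure.map_map measurable_fst hpairmeas]
      exact Measure.map_id
    · rw [hπ₀, Measure.map_map measurable_snd hpairmeas]
      rfl
  have hπ₀val : ∫ p, cost2 p ∂π₀ = c := by
    rw [hπ₀, integral_map hpairmeas.aemeasurable continuous_cost2.aestronglyMeasurable, hc]
    exact integral_congr_ae (Filter.Eventually.of_forall fun x => hcostsym x)
  -- lower bound for arbitrary couplings
  have hlow : ∀ r ∈ (fun π => ∫ p, cost2 p ∂π) '' couplings σ (σ.map T), c ≤ r := by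
    rintro r ⟨π, ⟨hfst, hsnd⟩, rfl⟩
    have hgπ : Integrable (fun p : (Fin n → ℝ) × (Fin n → ℝ) => g p.1) π := by
      have : Integrable g (π.map Prod.fst) := by rw [hfst]; exact hgσ
      exact (integrable_map_measure hgcont.aestronglyMeasurable measurable_fst.aemeasurable).mp this
    have hhπ : Integrable (fun p : (Fin n → ℝ) × (Fin n → ℝ) => h p.2) π := by
      have : Integrable h (π.map Prod.snd) := by rw [hsnd]; exact hhν
      exact (integrable_map_measure hhcont.aestronglyMeasurable measurable_snd.aemeasurable).mp this
    have hq1π : Integrable (fun p : (Fin n → ℝ) × (Fin n → ℝ) => 1 + ∑ i, p.1 i ^ 2) π := by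
      have : Integrable (fun x => 1 + ∑ i, x i ^ 2) (π.map Prod.fst) := by rw [hfst]; exact hσ2
      exact (integrable_map_measure
        ((continuous_const.add continuous_sumsq).aestronglyMeasurable)
        measurable_fst.aemeasurable).mp this
    have hq2π : Integrable (fun p : (Fin n → ℝ) × (Fin n → ℝ) => 1 + ∑ i, p.2 i ^ 2) π := by
      have : Integrable (fun x => 1 + ∑ i, x i ^ 2) (π.map Prod.snd) := by rw [hsnd]; exact hν2
      exact (integrable_map_measure
        ((continuous_const.add continuous_sumsq).aestronglyMeasurable)
        measurable_snd.aemeasurable).mp this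
    have hcostπ : Integrable cost2 π := by
      apply ((hq1π.const_mul 2).add (hq2π.const_mul 2)).mono'
        continuous_cost2.aestronglyMeasurable
      refine Filter.Eventually.of_forall fun p => ?_
      have h1 : cost2 p ≤ 2 * (1 + ∑ i, p.1 i ^ 2) + 2 * (1 + ∑ i, p.2 i ^ 2) := by
        have hsub := sumsq_sub_le p.1 p.2
        simp only [Pi.sub_apply] at hsub
        unfold cost2
        nlinarith [hsub, Finset.sum_nonneg (fun i (_ : i ∈ Finset.univ) => sq_nonneg (p.1 i)),
          Finset.sum_nonneg (fun i (_ : i ∈ Finset.univ) => sq_nonneg (p.2 i))]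
      have h0 : 0 ≤ cost2 p := Finset.sum_nonneg fun i _ => sq_nonneg _
      rw [Real.norm_eq_abs, abs_of_nonneg h0]
      exact h1
    have k1 : ∫ x, g x ∂σ = ∫ p : (Fin n → ℝ) × (Fin n → ℝ), g p.1 ∂π := by
      rw [← hfst]
      exact integral_map measurable_fst.aemeasurable hgcont.aestronglyMeasurable
    have k2 : ∫ y, h y ∂(σ.map T) = ∫ p : (Fin n → ℝ) × (Fin n → ℝ), h p.2 ∂π := by
      rw [← hsnd]
      exact integral_map measurable_snd.aemeasurable hhcont.aestronglyMeasurable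
    have key : c = ∫ p, (g p.1 + h p.2) ∂π := by
      rw [hcsplit, k1, k2, ← integral_add hgπ hhπ]
    rw [key]
    exact integral_mono (hgπ.add hhπ) hcostπ fun p => hineq p.1 p.2
  have hsinf : sInf ((fun π => ∫ p, cost2 p ∂π) '' couplings σ (σ.map T)) = c := by
    apply le_antisymm
    · exact csInf_le ⟨c, hlow⟩ ⟨π₀, hπ₀mem, hπ₀val⟩
    · exact le_csInf ⟨c, π₀, hπ₀mem, hπ₀val⟩ hlow
  refine ⟨hTmeas, rfl, ?_⟩
  rw [W2, hsinf, Real.sq_sqrt hc0]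

lemma mul_inv_mul_inv_cancel (a b : ℝ) (ha : a ≠ 0) (hb : b ≠ 0) :
    a * b⁻¹ * (b * a⁻¹) = 1 := by
  calc a * b⁻¹ * (b * a⁻¹) = (a * a⁻¹) * (b⁻¹ * b) := by ring
    _ = 1 := by rw [mul_inv_cancel₀ ha, inv_mul_cancel₀ hb, one_mul]

/-! ### Conjugated diagonal matrices -/

lemma conj_mul (P : Matrix (Fin n) (Fin n) ℝ) (hP : Pᵀ * P = 1) (w w' : Fin n → ℝ) :
    (Pᵀ * diagonal w * P) * (Pᵀ * diagonal w' * P) = Pᵀ * diagonal (w * w') * P := by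
  have hP' : P * Pᵀ = 1 := mul_eq_one_comm.mp hP
  simp only [Matrix.mul_assoc]
  rw [← Matrix.mul_assoc P Pᵀ, hP', Matrix.one_mul, ← Matrix.mul_assoc (diagonal w),
    diagonal_mul_diagonal]
  rfl

lemma conj_transpose' (P : Matrix (Fin n) (Fin n) ℝ) (w : Fin n → ℝ) :
    (Pᵀ * diagonal w * P)ᵀ = Pᵀ * diagonal w * P := by
  rw [transpose_mul, transpose_mul, transpose_transpose, diagonal_transpose, Matrix.mul_assoc]

lemma conj_inv (P : Matrix (Fin n) (Fin n) ℝ) (hP : Pᵀ * P = 1) (w : Fin n → ℝ)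
    (hw : ∀ i, w i ≠ 0) : (Pᵀ * diagonal w * P)⁻¹ = Pᵀ * diagonal w⁻¹ * P := by
  apply inv_eq_left_inv
  rw [conj_mul P hP]
  have : w⁻¹ * w = fun _ => (1:ℝ) := by
    funext i
    exact inv_mul_cancel₀ (hw i)
  rw [this, diagonal_one, Matrix.mul_one, hP]

lemma conj_dot (P : Matrix (Fin n) (Fin n) ℝ) (w : Fin n → ℝ) (v : Fin n → ℝ) :
    v ⬝ᵥ ((Pᵀ * diagonal w * P).mulVec v) = ∑ i, w i * (P.mulVec v i) ^ 2 := by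
  rw [← mulVec_mulVec, ← mulVec_mulVec]
  have h1 : v ⬝ᵥ (Pᵀ.mulVec (diagonal w |>.mulVec (P.mulVec v)))
      = (P.mulVec v) ⬝ᵥ ((diagonal w).mulVec (P.mulVec v)) := by
    rw [← dot_mulVec_comm]
  rw [h1]
  simp only [dotProduct, mulVec_diagonal]
  exact Finset.sum_congr rfl fun i _ => by ring

lemma conj_det (P : Matrix (Fin n) (Fin n) ℝ) (hP : Pᵀ * P = 1) (w : Fin n → ℝ) :
    (Pᵀ * diagonal w * P).det = ∏ i, w i := by
  have h2 : P.det * P.det = 1 := by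
    have := congrArg Matrix.det hP
    rwa [det_mul, det_transpose, det_one] at this
  rw [det_mul, det_mul, det_transpose, det_diagonal]
  linear_combination (∏ i, w i) * h2

lemma sumsq_P (P : Matrix (Fin n) (Fin n) ℝ) (hP : Pᵀ * P = 1) (z : Fin n → ℝ) :
    ∑ i, (P.mulVec z i) ^ 2 = ∑ i, z i ^ 2 := by
  have h1 : (P.mulVec z) ⬝ᵥ (P.mulVec z) = z ⬝ᵥ z := by
    rw [dot_mulVec_comm, mulVec_mulVec, hP, one_mulVec]
  simpa [dotProduct, sq] using h1

lemma conj_pos_quad (P : Matrix (Fin n) (Fin n) ℝ) (hP : Pᵀ * P = 1) (w : Fin n → ℝ)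
    (hw : ∀ i, 0 < w i) :
    ∃ ε : ℝ, 0 < ε ∧ ∀ z : Fin n → ℝ,
      ε * ∑ i, z i ^ 2 ≤ z ⬝ᵥ ((Pᵀ * diagonal w * P).mulVec z) := by
  rcases isEmpty_or_nonempty (Fin n) with hn | hn
  · refine ⟨1, one_pos, fun z => ?_⟩
    simp [dotProduct]
  · refine ⟨Finset.univ.inf' Finset.univ_nonempty w, ?_, fun z => ?_⟩
    · rw [Finset.lt_inf'_iff]
      exact fun i _ => hw i
    · rw [conj_dot, ← sumsq_P P hP z, Finset.mul_sum]
      apply Finset.sum_le_sum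
      intro i _
      exact mul_le_mul_of_nonneg_right (Finset.inf'_le _ (Finset.mem_univ i)) (sq_nonneg _)

end OTAux

open OTAux

/-- Compatibility for Gaussians with commuting shears: let `μ = N(m₁, I)`, let `A, C` be
symmetric positive definite matrices simultaneously diagonalized by an orthogonal matrix
`P` (`A = PᵀΛP`, `C = PᵀDP` with `Λ, D` diagonal with positive entries), `S(x) = Ax + b`,
and `σ = N(Cm₁ + d, C²)`. Then `T_σ^μ(x) = C⁻¹(x − d)`, `T_σ^{S_♯μ}(x) = AC⁻¹(x − d) + b`,
and the compatibility condition `T_σ^{S_♯μ} = S ∘ T_σ^μ` holds. -/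
theorem gaussian_shear_compatibility {n : ℕ} (m₁ b d : Fin n → ℝ)
    (P L D A C : Matrix (Fin n) (Fin n) ℝ)
    (hP : Pᵀ * P = 1)
    (hL : L.IsDiag) (hLpos : ∀ i, 0 < L i i)
    (hD : D.IsDiag) (hDpos : ∀ i, 0 < D i i)
    (hA : A = Pᵀ * L * P) (hC : C = Pᵀ * D * P) :
    IsOptimalMap (gaussianMeasure (C.mulVec m₁ + d) (C * C)) (gaussianMeasure m₁ 1)
      (fun x => C⁻¹.mulVec (x - d)) ∧
    IsOptimalMap (gaussianMeasure (C.mulVec m₁ + d) (C * C))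
      ((gaussianMeasure m₁ 1).map (fun x => A.mulVec x + b))
      (fun x => A.mulVec (C⁻¹.mulVec (x - d)) + b) ∧
    (fun x => A.mulVec (C⁻¹.mulVec (x - d)) + b) =
      (fun x => A.mulVec x + b) ∘ (fun x => C⁻¹.mulVec (x - d)) := by
  have hLd : diagonal (Matrix.diag L) = L := hL.diagonal_diag
  have hDd : diagonal (Matrix.diag D) = D := hD.diagonal_diag
  have hA' : A = Pᵀ * diagonal (Matrix.diag L) * P := by rw [hLd, hA]
  have hC' : C = Pᵀ * diagonal (Matrix.diag D) * P := by rw [hDd, hC]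
  have hDdiagpos : ∀ i, 0 < Matrix.diag D i := fun i => hDpos i
  have hLdiagpos : ∀ i, 0 < Matrix.diag L i := fun i => hLpos i
  have hCsym : Cᵀ = C := by rw [hC', conj_transpose']
  have hCdet : 0 < C.det := by
    rw [hC', conj_det P hP]
    exact Finset.prod_pos fun i _ => hDdiagpos i
  have hUC : IsUnit C.det := isUnit_iff_ne_zero.mpr hCdet.ne'
  have hAdet : 0 < A.det := by
    rw [hA', conj_det P hP]
    exact Finset.prod_pos fun i _ => hLdiagpos i
  have hUA : IsUnit A.det := isUnit_iff_ne_zero.mpr hAdet.ne'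
  have hCinv : C⁻¹ = Pᵀ * diagonal (Matrix.diag D)⁻¹ * P := by
    rw [hC', conj_inv P hP _ fun i => (hDdiagpos i).ne']
  have hAinv : A⁻¹ = Pᵀ * diagonal (Matrix.diag L)⁻¹ * P := by
    rw [hA', conj_inv P hP _ fun i => (hLdiagpos i).ne']
  -- second moments of σ
  have hCC : C * C = Pᵀ * diagonal (Matrix.diag D * Matrix.diag D) * P := by
    rw [hC', conj_mul P hP]
  have hCCinv : (C * C)⁻¹ = Pᵀ * diagonal (Matrix.diag D * Matrix.diag D)⁻¹ * P := by
    rw [hCC, conj_inv P hP (Matrix.diag D * Matrix.diag D)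
      fun i => (mul_pos (hDdiagpos i) (hDdiagpos i)).ne']
  obtain ⟨ε, hε, hq⟩ := conj_pos_quad P hP (Matrix.diag D * Matrix.diag D)⁻¹
    (fun i => by
      have h := hDdiagpos i
      simp only [Pi.inv_apply, Pi.mul_apply]
      exact inv_pos.mpr (mul_pos h h))
  have hq' : ∀ z : Fin n → ℝ, ε * ∑ i, z i ^ 2 ≤ z ⬝ᵥ ((C * C)⁻¹.mulVec z) := by
    intro z
    rw [hCCinv]
    exact hq z
  have hσ2 : Integrable (fun x => 1 + ∑ i, x i ^ 2)
      (gaussianMeasure (C.mulVec m₁ + d) (C * C)) :=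
    gaussian_moment _ (C * C) hε hq'
  have hmap : (gaussianMeasure (C.mulVec m₁ + d) (C * C)).map
      (fun x => C⁻¹.mulVec (x - d)) = gaussianMeasure m₁ 1 :=
    gaussianMeasure_map_inv C hCsym hCdet m₁ d
  have hCpsd : ∀ v : Fin n → ℝ, 0 ≤ v ⬝ᵥ (C.mulVec v) := by
    intro v
    rw [hC', conj_dot]
    exact Finset.sum_nonneg fun i _ => mul_nonneg (hDdiagpos i).le (sq_nonneg _)
  have hCinvsym : (C⁻¹)ᵀ = C⁻¹ := by
    rw [hCinv, conj_transpose']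
  -- part 1
  have part1 : IsOptimalMap (gaussianMeasure (C.mulVec m₁ + d) (C * C)) (gaussianMeasure m₁ 1)
      (fun x => C⁻¹.mulVec (x - d)) := by
    apply isOptimalMap_affine _ hσ2 C⁻¹ C hCinvsym (Matrix.nonsing_inv_mul _ hUC)
      (Matrix.mul_nonsing_inv _ hUC) hCpsd d 0 _ ?_ _ hmap
    funext x
    rw [add_zero]
  -- part 2
  have hACinv : A * C⁻¹ = Pᵀ * diagonal (Matrix.diag L * (Matrix.diag D)⁻¹) * P := by
    rw [hA', hCinv, conj_mul P hP]
  have hCAinv : C * A⁻¹ = Pᵀ * diagonal (Matrix.diag D * (Matrix.diag L)⁻¹) * P := by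
    rw [hC', hAinv, conj_mul P hP]
  have hM2sym : (A * C⁻¹)ᵀ = A * C⁻¹ := by rw [hACinv, conj_transpose']
  have hM2N2 : (A * C⁻¹) * (C * A⁻¹) = 1 := by
    rw [hACinv, hCAinv, conj_mul P hP]
    have : (Matrix.diag L * (Matrix.diag D)⁻¹) * (Matrix.diag D * (Matrix.diag L)⁻¹)
        = fun _ => (1:ℝ) := by
      funext i
      simp only [Pi.mul_apply, Pi.inv_apply]
      exact mul_inv_mul_inv_cancel _ _ (hLdiagpos i).ne' (hDdiagpos i).ne'
    rw [this, diagonal_one, Matrix.mul_one, hP]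
  have hN2M2 : (C * A⁻¹) * (A * C⁻¹) = 1 := by
    rw [hACinv, hCAinv, conj_mul P hP]
    have : (Matrix.diag D * (Matrix.diag L)⁻¹) * (Matrix.diag L * (Matrix.diag D)⁻¹)
        = fun _ => (1:ℝ) := by
      funext i
      simp only [Pi.mul_apply, Pi.inv_apply]
      exact mul_inv_mul_inv_cancel _ _ (hDdiagpos i).ne' (hLdiagpos i).ne'
    rw [this, diagonal_one, Matrix.mul_one, hP]
  have hN2psd : ∀ v : Fin n → ℝ, 0 ≤ v ⬝ᵥ ((C * A⁻¹).mulVec v) := by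
    intro v
    rw [hCAinv, conj_dot]
    refine Finset.sum_nonneg fun i _ => mul_nonneg ?_ (sq_nonneg _)
    simp only [Pi.mul_apply, Pi.inv_apply]
    exact (mul_pos (hDdiagpos i) (inv_pos.mpr (hLdiagpos i))).le
  have hSmeas : Measurable fun x : Fin n → ℝ => A.mulVec x + b :=
    (continuous_affine A b).measurable
  have hT1meas : Measurable fun x : Fin n → ℝ => C⁻¹.mulVec (x - d) :=
    ((continuous_const.matrix_mulVec (continuous_id.sub continuous_const))).measurable
  have hmap2 : (gaussianMeasure (C.mulVec m₁ + d) (C * C)).map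
      (fun x => A.mulVec (C⁻¹.mulVec (x - d)) + b)
      = (gaussianMeasure m₁ 1).map (fun x => A.mulVec x + b) := by
    rw [← hmap, Measure.map_map hSmeas hT1meas]
    rfl
  have part2 : IsOptimalMap (gaussianMeasure (C.mulVec m₁ + d) (C * C))
      ((gaussianMeasure m₁ 1).map (fun x => A.mulVec x + b))
      (fun x => A.mulVec (C⁻¹.mulVec (x - d)) + b) := by
    apply isOptimalMap_affine _ hσ2 (A * C⁻¹) (C * A⁻¹) hM2sym hM2N2 hN2M2 hN2psd d b _ ?_ _ hmap2
    funext x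
    rw [← mulVec_mulVec]
  exact ⟨part1, part2, rfl⟩
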